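/- Let ξ > 0 be real, θ ∈ [−π/4, 0], r ≥ 0, β = r·e^{iθ}, and define D(ξ, β) := min{ 2|β|, √2·|ξ − β|, √2·|ξ + β|, √2·|ξ − iβ|, √2·|ξ + iβ|, 2ξ }. Set β₁(θ) = ξ·(−cos θ + √(1 + cos²θ)) and β₂(θ) = ξ·(cos θ + √(1 + cos²θ)). Then: (a) if 0 ≤ r ≤ β₁(θ) then D(ξ, β) = 2r; (b) if β₁(θ) ≤ r ≤ β₂(θ) then D(ξ, β) = √2·|ξ − β|; (c) if r ≥ β₂(θ) then D(ξ, β) = 2ξ. -/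

import Mathlib

open Real Complex

/-- The minimum pairwise Euclidean distance of the 8-point composite constellation. -/
noncomputable def Dmin (ξ : ℝ) (β : ℂ) : ℝ :=
  min (min (min (2 * ‖β‖) (Real.sqrt 2 * ‖(ξ : ℂ) - β‖))
        (min (Real.sqrt 2 * ‖(ξ : ℂ) + β‖)
          (Real.sqrt 2 * ‖(ξ : ℂ) - Complex.I * β‖)))
      (min (Real.sqrt 2 * ‖(ξ : ℂ) + Complex.I * β‖) (2 * ξ))

private lemma min6_first {t1 t2 t3 t4 t5 t6 : ℝ} (h2 : t1 ≤ t2) (h3 : t1 ≤ t3)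
    (h4 : t1 ≤ t4) (h5 : t1 ≤ t5) (h6 : t1 ≤ t6) :
    min (min (min t1 t2) (min t3 t4)) (min t5 t6) = t1 := by
  rw [min_eq_left h2, min_eq_left (le_min h3 h4), min_eq_left (le_min h5 h6)]

private lemma min6_second {t1 t2 t3 t4 t5 t6 : ℝ} (h1 : t2 ≤ t1) (h3 : t2 ≤ t3)
    (h4 : t2 ≤ t4) (h5 : t2 ≤ t5) (h6 : t2 ≤ t6) :
    min (min (min t1 t2) (min t3 t4)) (min t5 t6) = t2 := by
  rw [min_eq_right h1, min_eq_left (le_min h3 h4), min_eq_left (le_min h5 h6)]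

private lemma min6_sixth {t1 t2 t3 t4 t5 t6 : ℝ} (h1 : t6 ≤ t1) (h2 : t6 ≤ t2)
    (h3 : t6 ≤ t3) (h4 : t6 ≤ t4) (h5 : t6 ≤ t5) :
    min (min (min t1 t2) (min t3 t4)) (min t5 t6) = t6 := by
  rw [min_eq_right h5, min_eq_right (le_min (le_min h1 h2) (le_min h3 h4))]

set_option maxHeartbeats 2000000 in
theorem stmt_9 (ξ θ r : ℝ) (hξ : 0 < ξ) (hθ : θ ∈ Set.Icc (-(π / 4)) 0) (hr : 0 ≤ r)
    (β : ℂ) (hβ : β = (r : ℂ) * Complex.exp ((θ : ℂ) * Complex.I)) :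
    (r ≤ ξ * (-Real.cos θ + Real.sqrt (1 + Real.cos θ ^ 2)) → Dmin ξ β = 2 * r) ∧
    (ξ * (-Real.cos θ + Real.sqrt (1 + Real.cos θ ^ 2)) ≤ r ∧
        r ≤ ξ * (Real.cos θ + Real.sqrt (1 + Real.cos θ ^ 2)) →
      Dmin ξ β = Real.sqrt 2 * ‖(ξ : ℂ) - β‖) ∧
    (ξ * (Real.cos θ + Real.sqrt (1 + Real.cos θ ^ 2)) ≤ r → Dmin ξ β = 2 * ξ) := by
  obtain ⟨hθ1, hθ2⟩ := hθ
  have hpi : (0:ℝ) < π := Real.pi_pos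
  -- components of β
  have hβ' : β = ((r * Real.cos θ : ℝ) : ℂ) + ((r * Real.sin θ : ℝ) : ℂ) * Complex.I := by
    rw [hβ, Complex.exp_mul_I, ← Complex.ofReal_cos, ← Complex.ofReal_sin]
    push_cast
    ring
  have habsβ : ‖β‖ = r := by
    rw [hβ, norm_mul, Complex.norm_real, Real.norm_eq_abs, _root_.abs_of_nonneg hr,
      Complex.norm_exp_ofReal_mul_I, mul_one]
  have pyth : Real.cos θ ^ 2 + Real.sin θ ^ 2 = 1 := by
    nlinarith [Real.sin_sq_add_cos_sq θ]
  have n2 : Complex.normSq ((ξ : ℂ) - β) = ξ^2 - 2*ξ*r*Real.cos θ + r^2 := by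
    rw [hβ']
    simp [Complex.normSq_apply, Complex.cos_ofReal_re, Complex.sin_ofReal_re]
    linear_combination r^2 * pyth
  have n3 : Complex.normSq ((ξ : ℂ) + β) = ξ^2 + 2*ξ*r*Real.cos θ + r^2 := by
    rw [hβ']
    simp [Complex.normSq_apply, Complex.cos_ofReal_re, Complex.sin_ofReal_re]
    linear_combination r^2 * pyth
  have n4 : Complex.normSq ((ξ : ℂ) - Complex.I * β) = ξ^2 + 2*ξ*r*Real.sin θ + r^2 := by
    rw [hβ']
    simp [Complex.normSq_apply, Complex.cos_ofReal_re, Complex.sin_ofReal_re]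
    linear_combination r^2 * pyth
  have n5 : Complex.normSq ((ξ : ℂ) + Complex.I * β) = ξ^2 - 2*ξ*r*Real.sin θ + r^2 := by
    rw [hβ']
    simp [Complex.normSq_apply, Complex.cos_ofReal_re, Complex.sin_ofReal_re]
    linear_combination r^2 * pyth
  have hs0 : Real.sin θ ≤ 0 := by
    rw [show θ = -(-θ) by ring, Real.sin_neg]
    have : 0 ≤ Real.sin (-θ) := Real.sin_nonneg_of_nonneg_of_le_pi (by linarith) (by linarith)
    linarith
  have hc0 : 0 ≤ Real.cos θ := Real.cos_nonneg_of_mem_Icc ⟨by linarith, by linarith⟩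
  have hcs : 0 ≤ Real.cos θ + Real.sin θ := by
    have h1 : 0 ≤ Real.sin (θ + π/4) :=
      Real.sin_nonneg_of_nonneg_of_le_pi (by linarith) (by linarith)
    rw [Real.sin_add, Real.cos_pi_div_four, Real.sin_pi_div_four] at h1
    nlinarith [Real.sq_sqrt (by norm_num : (0:ℝ) ≤ 2), Real.sqrt_nonneg 2]
  have hk0 : 0 ≤ Real.sqrt (1 + Real.cos θ ^ 2) := Real.sqrt_nonneg _
  have hk2 : Real.sqrt (1 + Real.cos θ ^ 2) ^ 2 = 1 + Real.cos θ ^ 2 :=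
    Real.sq_sqrt (by positivity)
  generalize hkg : Real.sqrt (1 + Real.cos θ ^ 2) = k at *
  generalize hcg : Real.cos θ = c at *
  generalize hsg : Real.sin θ = s at *
  have hk1 : 1 ≤ k := by nlinarith
  have hklec : k ≤ 1 + c := by nlinarith
  -- sqrt expressions
  have e1 : 2 * ‖β‖ = Real.sqrt (4 * r^2) := by
    rw [habsβ, show 4*r^2 = (2*r)^2 by ring, Real.sqrt_sq (by linarith)]
  have esqrt : ∀ z : ℂ, Real.sqrt 2 * ‖z‖ = Real.sqrt (2 * Complex.normSq z) := by
    intro z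
    rw [Complex.norm_def, Real.sqrt_mul (by norm_num : (0:ℝ) ≤ 2)]
  have e2 : Real.sqrt 2 * ‖(ξ : ℂ) - β‖ = Real.sqrt (2*(ξ^2 - 2*ξ*r*c + r^2)) := by
    rw [esqrt, n2]
  have e3 : Real.sqrt 2 * ‖(ξ : ℂ) + β‖ = Real.sqrt (2*(ξ^2 + 2*ξ*r*c + r^2)) := by
    rw [esqrt, n3]
  have e4 : Real.sqrt 2 * ‖(ξ : ℂ) - Complex.I * β‖
      = Real.sqrt (2*(ξ^2 + 2*ξ*r*s + r^2)) := by
    rw [esqrt, n4]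
  have e5 : Real.sqrt 2 * ‖(ξ : ℂ) + Complex.I * β‖
      = Real.sqrt (2*(ξ^2 - 2*ξ*r*s + r^2)) := by
    rw [esqrt, n5]
  have e6 : Real.sqrt (4 * ξ^2) = 2 * ξ := by
    rw [show 4*ξ^2 = (2*ξ)^2 by ring, Real.sqrt_sq (by linarith)]
  have e1' : Real.sqrt (4 * r^2) = 2 * r := by
    rw [show 4*r^2 = (2*r)^2 by ring, Real.sqrt_sq (by linarith)]
  -- T2 is always the least among T2,T3,T4,T5
  have h23 : (2*(ξ^2 - 2*ξ*r*c + r^2)) ≤ (2*(ξ^2 + 2*ξ*r*c + r^2)) := by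
    nlinarith [mul_nonneg (mul_nonneg hξ.le hr) hc0]
  have h24 : (2*(ξ^2 - 2*ξ*r*c + r^2)) ≤ (2*(ξ^2 + 2*ξ*r*s + r^2)) := by
    nlinarith [mul_nonneg (mul_nonneg hξ.le hr) hcs]
  have h25 : (2*(ξ^2 - 2*ξ*r*c + r^2)) ≤ (2*(ξ^2 - 2*ξ*r*s + r^2)) := by
    nlinarith [mul_nonneg (mul_nonneg hξ.le hr) (by linarith : (0:ℝ) ≤ c - s)]
  refine ⟨fun h1 => ?_, fun ⟨hb1, hb2⟩ => ?_, fun h3 => ?_⟩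
  · -- case a : min is 2r
    have key : 4*r^2 ≤ 2*(ξ^2 - 2*ξ*r*c + r^2) := by
      nlinarith [mul_nonneg (sub_nonneg.2 h1) (by nlinarith : (0:ℝ) ≤ r + ξ*(c+k))]
    have keyξ : 4*r^2 ≤ 4*ξ^2 := by nlinarith
    have h6 : Real.sqrt (4*r^2) ≤ 2*ξ := by
      have := Real.sqrt_le_sqrt keyξ; rwa [e6] at this
    rw [Dmin, e1, e2, e3, e4, e5,
      min6_first (Real.sqrt_le_sqrt key) (Real.sqrt_le_sqrt (le_trans key h23))
        (Real.sqrt_le_sqrt (le_trans key h24)) (Real.sqrt_le_sqrt (le_trans key h25))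
        h6, e1']
  · -- case b : min is √2 |ξ - β|
    have key1 : 2*(ξ^2 - 2*ξ*r*c + r^2) ≤ 4*r^2 := by
      nlinarith [mul_nonneg (sub_nonneg.2 hb1) (by nlinarith : (0:ℝ) ≤ r + ξ*(c+k))]
    have key6 : 2*(ξ^2 - 2*ξ*r*c + r^2) ≤ 4*ξ^2 := by
      nlinarith [mul_nonneg (sub_nonneg.2 hb2) (by nlinarith : (0:ℝ) ≤ r + ξ*(k-c))]
    have h6 : Real.sqrt (2*(ξ^2 - 2*ξ*r*c + r^2)) ≤ 2*ξ := by
      have := Real.sqrt_le_sqrt key6; rwa [e6] at this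
    rw [Dmin, e1, e2, e3, e4, e5,
      min6_second (Real.sqrt_le_sqrt key1) (Real.sqrt_le_sqrt h23)
        (Real.sqrt_le_sqrt h24) (Real.sqrt_le_sqrt h25) h6, ← e2]
  · -- case c : min is 2ξ
    have hξr : ξ ≤ r := by nlinarith
    have key2 : 4*ξ^2 ≤ 2*(ξ^2 - 2*ξ*r*c + r^2) := by
      nlinarith [mul_nonneg (sub_nonneg.2 h3) (by nlinarith : (0:ℝ) ≤ r + ξ*(k-c))]
    have key1 : 4*ξ^2 ≤ 4*r^2 := by nlinarith
    have g1 : 2*ξ ≤ Real.sqrt (4*r^2) := by have := Real.sqrt_le_sqrt key1; rwa [e6] at this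
    have g2 : 2*ξ ≤ Real.sqrt (2*(ξ^2 - 2*ξ*r*c + r^2)) := by
      have := Real.sqrt_le_sqrt key2; rwa [e6] at this
    have g3 : 2*ξ ≤ Real.sqrt (2*(ξ^2 + 2*ξ*r*c + r^2)) := by
      have := Real.sqrt_le_sqrt (le_trans key2 h23); rwa [e6] at this
    have g4 : 2*ξ ≤ Real.sqrt (2*(ξ^2 + 2*ξ*r*s + r^2)) := by
      have := Real.sqrt_le_sqrt (le_trans key2 h24); rwa [e6] at this
    have g5 : 2*ξ ≤ Real.sqrt (2*(ξ^2 - 2*ξ*r*s + r^2)) := by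
      have := Real.sqrt_le_sqrt (le_trans key2 h25); rwa [e6] at this
    rw [Dmin, e1, e2, e3, e4, e5, min6_sixth g1 g2 g3 g4 g5]
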